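/- Let X be an L-subGaussian random vector with respect to its covariance Σ, β* ∈ R^p, and let α: (0,∞) → [0,∞) be nonincreasing with α(τ) ≤ inf_{y} inf_{|u|≤τ} ℓ''(y,u). Suppose E[(X^T u)^4] ≤ c^2 L^2 ‖Σ^{1/2}u‖^4 for a constant c and all u. Then for every u ∈ R^p and τ > 0, u^T K u ≥ α(τ) ‖Σ^{1/2}u‖^2 (1 − cL · P(|X^T β*| > τ)^{1/2}), where K = E[ℓ''(Y, X^T β*) X X^T]. -/

import Mathlib

open MeasureTheory Matrix

/-- Euclidean norm of a vector in `Fin p → ℝ`. -/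
noncomputable def eunorm {p : ℕ} (u : Fin p → ℝ) : ℝ := Real.sqrt (∑ j, u j ^ 2)

/-- curvature lower bound by truncation. If `X` is `L`-subGaussian with
covariance `Σ` (so `E[(Xᵀu)²] = ‖Σ^{1/2}u‖²`), `E[(Xᵀu)⁴] ≤ c²L²‖Σ^{1/2}u‖⁴`, and
`α(τ)` lower-bounds `ℓ''` on `|u| ≤ τ`, then for all `u` and `τ > 0`,
`uᵀKu ≥ α(τ)‖Σ^{1/2}u‖²(1 − cL·P(|Xᵀβ*| > τ)^{1/2})`
where `K = E[ℓ''(Y, Xᵀβ*) X Xᵀ]`. -/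
theorem curvature_lower_bound {p : ℕ} {Ω : Type*} [MeasurableSpace Ω]
    (μ : Measure Ω) [IsProbabilityMeasure μ]
    (X : Ω → Fin p → ℝ) (Y : Ω → ℝ) (hXmeas : Measurable X) (hYmeas : Measurable Y)
    (βs : Fin p → ℝ) (Sighalf : Matrix (Fin p) (Fin p) ℝ)
    (L c : ℝ) (hL : 0 < L) (hc : 0 < c)
    (hsubG : ∀ u : Fin p → ℝ,
      ∫ ω, Real.exp (u ⬝ᵥ X ω) ∂μ ≤ Real.exp (L ^ 2 * eunorm (Sighalf.mulVec u) ^ 2 / 2))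
    (hcov : ∀ u : Fin p → ℝ, ∫ ω, (X ω ⬝ᵥ u) ^ 2 ∂μ = eunorm (Sighalf.mulVec u) ^ 2)
    (hmoment4 : ∀ u : Fin p → ℝ,
      ∫ ω, (X ω ⬝ᵥ u) ^ 4 ∂μ ≤ c ^ 2 * L ^ 2 * eunorm (Sighalf.mulVec u) ^ 4)
    (ℓ'' : ℝ → ℝ → ℝ) (hℓnonneg : ∀ y u, 0 ≤ ℓ'' y u)
    (α : ℝ → ℝ) (hαnonneg : ∀ τ, 0 < τ → 0 ≤ α τ)
    (hαanti : ∀ τ₁ τ₂, 0 < τ₁ → τ₁ ≤ τ₂ → α τ₂ ≤ α τ₁)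
    (hα : ∀ τ, 0 < τ → ∀ y u, |u| ≤ τ → α τ ≤ ℓ'' y u)
    (K : Matrix (Fin p) (Fin p) ℝ)
    (hK : ∀ u : Fin p → ℝ,
      u ⬝ᵥ K.mulVec u = ∫ ω, ℓ'' (Y ω) (X ω ⬝ᵥ βs) * (X ω ⬝ᵥ u) ^ 2 ∂μ)
    (hint2 : ∀ u : Fin p → ℝ, Integrable (fun ω => (X ω ⬝ᵥ u) ^ 2) μ)
    (hint4 : ∀ u : Fin p → ℝ, Integrable (fun ω => (X ω ⬝ᵥ u) ^ 4) μ)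
    (hintK : ∀ u : Fin p → ℝ,
      Integrable (fun ω => ℓ'' (Y ω) (X ω ⬝ᵥ βs) * (X ω ⬝ᵥ u) ^ 2) μ) :
    ∀ (u : Fin p → ℝ) (τ : ℝ), 0 < τ →
      α τ * eunorm (Sighalf.mulVec u) ^ 2
          * (1 - c * L * Real.sqrt (μ {ω | τ < |X ω ⬝ᵥ βs|}).toReal)
        ≤ u ⬝ᵥ K.mulVec u := by
  intro u τ hτ
  classical
  set A : Set Ω := {ω | τ < |X ω ⬝ᵥ βs|} with hAdef
  have hXb : Measurable fun ω => X ω ⬝ᵥ βs := by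
    apply Finset.measurable_sum
    intro i _
    exact ((measurable_pi_apply i).comp hXmeas).mul measurable_const
  have hAmeas : MeasurableSet A := by
    have : A = (fun ω => |X ω ⬝ᵥ βs|) ⁻¹' Set.Ioi τ := rfl
    rw [this]
    exact (hXb.abs) measurableSet_Ioi
  set g : Ω → ℝ := fun ω => (X ω ⬝ᵥ u) ^ 2 with hgdef
  have hgmeas : Measurable g := by
    apply Measurable.pow_const
    apply Finset.measurable_sum
    intro i _
    exact ((measurable_pi_apply i).comp hXmeas).mul measurable_const
  have hgnonneg : ∀ ω, 0 ≤ g ω := fun ω => sq_nonneg _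
  set S : ℝ := eunorm (Sighalf.mulVec u) ^ 2 with hSdef
  have hS0 : 0 ≤ S := by
    have := Real.sqrt_nonneg (∑ j, (Sighalf.mulVec u) j ^ 2)
    positivity
  have hSint : ∫ ω, g ω ∂μ = S := hcov u
  have hP0 : 0 ≤ Real.sqrt (μ A).toReal := Real.sqrt_nonneg _
  -- Step 2 : ∫_A g ≤ c L S √P
  have hCS : ∫ ω in A, g ω ∂μ ≤ c * L * S * Real.sqrt (μ A).toReal := by
    have hmem2 : MemLp g 2 μ := by
      rw [memLp_two_iff_integrable_sq hgmeas.aestronglyMeasurable]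
      have : (fun ω => g ω ^ 2) = fun ω => (X ω ⬝ᵥ u) ^ 4 := by
        funext ω; simp [hgdef]; ring
      rw [this]; exact hint4 u
    have hmemInd : MemLp (A.indicator fun _ => (1 : ℝ)) 2 μ :=
      memLp_indicator_const 2 hAmeas 1 (Or.inr (measure_ne_top μ A))
    have htwo : ENNReal.ofReal (2:ℝ) = 2 := by norm_num
    have hmem2' : MemLp g (ENNReal.ofReal (2:ℝ)) μ := by rw [htwo]; exact hmem2
    have hmemInd' : MemLp (A.indicator fun _ => (1 : ℝ)) (ENNReal.ofReal (2:ℝ)) μ := by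
      rw [htwo]; exact hmemInd
    have hholder := MeasureTheory.integral_mul_le_Lp_mul_Lq_of_nonneg
      (⟨by norm_num, by norm_num, by norm_num⟩ : Real.HolderConjugate 2 2) (μ := μ)
      (f := g) (g := A.indicator fun _ => (1 : ℝ))
      (Filter.Eventually.of_forall hgnonneg)
      (Filter.Eventually.of_forall fun ω => Set.indicator_nonneg (fun _ _ => zero_le_one) ω)
      hmem2' hmemInd'
    have hleft : ∫ ω, g ω * (A.indicator fun _ => (1 : ℝ)) ω ∂μ = ∫ ω in A, g ω ∂μ := by
      rw [← integral_indicator hAmeas]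
      congr 1
      funext ω
      by_cases h : ω ∈ A <;> simp [Set.indicator_apply, h]
    have hgsq : ∫ ω, g ω ^ (2 : ℝ) ∂μ = ∫ ω, (X ω ⬝ᵥ u) ^ 4 ∂μ := by
      congr 1; funext ω
      rw [show ((2:ℝ) = ((2:ℕ):ℝ)) by norm_num, Real.rpow_natCast]
      simp [hgdef]; ring
    have hindsq : ∫ ω, (A.indicator fun _ => (1 : ℝ)) ω ^ (2 : ℝ) ∂μ = (μ A).toReal := by
      have : (fun ω => (A.indicator fun _ => (1 : ℝ)) ω ^ (2 : ℝ)) =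
          A.indicator fun _ => (1 : ℝ) := by
        funext ω
        by_cases h : ω ∈ A <;> simp [Set.indicator_apply, h, Real.zero_rpow]
      rw [this]
      exact integral_indicator_one hAmeas (μ := μ)
    rw [hleft, hgsq, hindsq] at hholder
    refine hholder.trans ?_
    have h4 : (∫ ω, (X ω ⬝ᵥ u) ^ 4 ∂μ) ^ (1 / (2:ℝ)) ≤ c * L * S := by
      have hb : ∫ ω, (X ω ⬝ᵥ u) ^ 4 ∂μ ≤ (c * L * S) ^ 2 := by
        have := hmoment4 u
        calc ∫ ω, (X ω ⬝ᵥ u) ^ 4 ∂μ ≤ c ^ 2 * L ^ 2 * eunorm (Sighalf.mulVec u) ^ 4 := this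
          _ = (c * L * S) ^ 2 := by rw [hSdef]; ring
      have hcLS : 0 ≤ c * L * S := by positivity
      calc (∫ ω, (X ω ⬝ᵥ u) ^ 4 ∂μ) ^ (1 / (2:ℝ))
          ≤ ((c * L * S) ^ 2) ^ (1 / (2:ℝ)) := by
            apply Real.rpow_le_rpow ?_ hb (by norm_num)
            rw [← hgsq]
            apply integral_nonneg
            intro ω
            positivity
        _ = c * L * S := by
            rw [← Real.rpow_natCast (c * L * S) 2, ← Real.rpow_mul hcLS]
            norm_num
    have hPr : ((μ A).toReal) ^ (1 / (2:ℝ)) = Real.sqrt (μ A).toReal := by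
      rw [Real.sqrt_eq_rpow]
    rw [hPr]
    exact mul_le_mul_of_nonneg_right h4 hP0
  -- Step 1 : u K u ≥ α τ * ∫_{Aᶜ} g
  have hsplit : ∫ ω in Aᶜ, g ω ∂μ = S - ∫ ω in A, g ω ∂μ := by
    have h1 := integral_add_compl hAmeas (hint2 u)
    have h2 := hcov u
    rw [h2] at h1
    simp only [hgdef]
    linarith [h1, hSdef]
  have hstep1 : α τ * ∫ ω in Aᶜ, g ω ∂μ ≤ u ⬝ᵥ K.mulVec u := by
    rw [hK u]
    calc α τ * ∫ ω in Aᶜ, g ω ∂μ = ∫ ω in Aᶜ, α τ * g ω ∂μ := by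
          rw [integral_const_mul]
      _ ≤ ∫ ω in Aᶜ, ℓ'' (Y ω) (X ω ⬝ᵥ βs) * g ω ∂μ := by
          apply setIntegral_mono_on (((hint2 u).const_mul (α τ)).integrableOn)
            ((hintK u).integrableOn) hAmeas.compl
          intro ω hω
          have habs : |X ω ⬝ᵥ βs| ≤ τ := by
            simp only [hAdef, Set.mem_compl_iff, Set.mem_setOf_eq, not_lt] at hω
            exact hω
          exact mul_le_mul_of_nonneg_right (hα τ hτ _ _ habs) (hgnonneg ω)
      _ ≤ ∫ ω, ℓ'' (Y ω) (X ω ⬝ᵥ βs) * g ω ∂μ := by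
          apply setIntegral_le_integral (hintK u)
          exact Filter.Eventually.of_forall fun ω =>
            mul_nonneg (hℓnonneg _ _) (hgnonneg ω)
  -- combine
  have hAint_nonneg : 0 ≤ ∫ ω in A, g ω ∂μ :=
    setIntegral_nonneg hAmeas fun ω _ => hgnonneg ω
  have hα0 : 0 ≤ α τ := hαnonneg τ hτ
  calc α τ * S * (1 - c * L * Real.sqrt (μ A).toReal)
      = α τ * (S - c * L * S * Real.sqrt (μ A).toReal) := by ring
    _ ≤ α τ * (S - ∫ ω in A, g ω ∂μ) := by
        apply mul_le_mul_of_nonneg_left _ hα0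
        linarith [hCS]
    _ = α τ * ∫ ω in Aᶜ, g ω ∂μ := by rw [hsplit]
    _ ≤ u ⬝ᵥ K.mulVec u := hstep1
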